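/- Among all symmetric matrices S satisfying Q + [A B]^T S_+ [A B] − blkdiag(S, 0) ⪰ 0 (with S_+ fixed PSD), the Riccati choice S* = A^T S_+ A + Q_xx − (A^T S_+ B + Q_xu) Y^{-1} (B^T S_+ A + Q_ux) with Y = B^T S_+ B + Q_uu is maximal in the Loewner order: any feasible S satisfies S ⪯ S*, and hence tr(S) ≤ tr(S*). -/

import Mathlib

open Matrix

lemma trace_nonneg_of_posSemidef {k : ℕ} {M : Matrix (Fin k) (Fin k) ℝ}
    (h : M.PosSemidef) : 0 ≤ M.trace := by
  rw [Matrix.trace]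
  apply Finset.sum_nonneg
  intro i _
  exact h.diag_nonneg

/-- Among all symmetric `S` such that `Q + [A B]ᵀ S₊ [A B] − blkdiag(S, 0) ⪰ 0`
(with `S₊` a fixed symmetric PSD matrix), the Riccati choice
`S* = Aᵀ S₊ A + Q_xx − (Aᵀ S₊ B + Q_xu) Y⁻¹ (Bᵀ S₊ A + Q_ux)` with
`Y = Bᵀ S₊ B + Q_uu` is maximal in the Loewner order: `S ⪯ S*`, hence
`tr(S) ≤ tr(S*)`. -/
theorem riccati_choice_maximal {n m : ℕ}
    (A : Matrix (Fin n) (Fin n) ℝ) (B : Matrix (Fin n) (Fin m) ℝ)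
    (Splus : Matrix (Fin n) (Fin n) ℝ) (hSp : Splus.PosSemidef)
    (Qxx : Matrix (Fin n) (Fin n) ℝ) (Qxu : Matrix (Fin n) (Fin m) ℝ)
    (Qux : Matrix (Fin m) (Fin n) ℝ) (Quu : Matrix (Fin m) (Fin m) ℝ)
    (hQsym : Qux = Qxuᵀ)
    (hQ : (fromBlocks Qxx Qxu Qux Quu).PosSemidef)
    (hQuu : Quu.PosDef)
    (Y : Matrix (Fin m) (Fin m) ℝ) (hY : Y = Bᵀ * Splus * B + Quu)
    (Sstar : Matrix (Fin n) (Fin n) ℝ)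
    (hSstar : Sstar = Aᵀ * Splus * A + Qxx -
      (Aᵀ * Splus * B + Qxu) * Y⁻¹ * (Bᵀ * Splus * A + Qux))
    (S : Matrix (Fin n) (Fin n) ℝ) (hSsym : S.IsSymm)
    (hfeas : (fromBlocks Qxx Qxu Qux Quu +
      (fromCols A B)ᵀ * Splus * fromCols A B -
        fromBlocks S 0 0 0).PosSemidef) :
    (Sstar - S).PosSemidef ∧ S.trace ≤ Sstar.trace := by
  have hSpT : Splusᵀ = Splus := hSp.1
  have hct : (Qxu + Aᵀ * Splus * B)ᴴ = Bᵀ * Splus * A + Qux := by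
    rw [conjTranspose_eq_transpose_of_trivial, transpose_add, transpose_mul,
      transpose_mul, transpose_transpose, hSpT, hQsym, ← Matrix.mul_assoc,
      add_comm]
  -- Rewrite the feasibility matrix in block form
  have hblock : (fromBlocks Qxx Qxu Qux Quu +
      (fromCols A B)ᵀ * Splus * fromCols A B - fromBlocks S 0 0 0) =
      fromBlocks (Qxx + Aᵀ * Splus * A - S) (Qxu + Aᵀ * Splus * B)
        ((Qxu + Aᵀ * Splus * B)ᴴ) Y := by
    rw [transpose_fromCols, fromRows_mul, fromRows_mul_fromCols,
      fromBlocks_add, sub_eq_add_neg, Matrix.fromBlocks_neg, fromBlocks_add,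
      hct, hY]
    congr 1 <;> abel
  have hYpd : Y.PosDef := by
    have h1 := hSp.mul_mul_conjTranspose_same Bᵀ
    rw [conjTranspose_eq_transpose_of_trivial, transpose_transpose] at h1
    rw [hY]
    exact Matrix.PosDef.posSemidef_add h1 hQuu
  haveI : Invertible Y := hYpd.isUnit.invertible
  rw [hblock] at hfeas
  have hschur := (Matrix.PosDef.fromBlocks₂₂ (Qxx + Aᵀ * Splus * A - S)
    (Qxu + Aᵀ * Splus * B) hYpd).mp hfeas
  rw [hct] at hschur
  have hkey : (Sstar - S).PosSemidef := by
    convert hschur using 1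
    · rfl
    rw [hSstar, add_comm Qxu (Aᵀ * Splus * B)]
    abel
  refine ⟨hkey, ?_⟩
  have ht := trace_nonneg_of_posSemidef hkey
  rw [Matrix.trace_sub] at ht
  linarith
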